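/- Let ψ : ℝⁿ → ℝ be C², let x₀ ∈ ℝⁿ, let (p_k)_{k∈ℕ} be a sequence of reals with p_k > 2 and p_k → ∞, and let x_k → x₀ be a sequence of points such that for every k one has ∇ψ(x_k) ≠ 0 and (p_k − 2)‖∇ψ(x_k)‖^{p_k−4} Δ_∞ψ(x_k) + ‖∇ψ(x_k)‖^{p_k−2} Δψ(x_k) ≤ 0. Then Δ_∞ψ(x₀) ≤ 0. -/

import Mathlib

open Filter

/-- The infinity-Laplacian `Δ_∞ψ(x) = ⟨D²ψ(x) ∇ψ(x), ∇ψ(x)⟩` of `ψ` at `x`,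
where the Hessian is `D²ψ(x) = D(∇ψ)(x)`. -/
noncomputable def infLap (n : ℕ) (ψ : EuclideanSpace ℝ (Fin n) → ℝ)
    (x : EuclideanSpace ℝ (Fin n)) : ℝ :=
  inner ℝ (fderiv ℝ (gradient ψ) x (gradient ψ x)) (gradient ψ x)

/-- The Laplacian `Δψ(x)`, i.e. the trace of the Hessian `D²ψ(x)`. -/
noncomputable def lap (n : ℕ) (ψ : EuclideanSpace ℝ (Fin n) → ℝ)
    (x : EuclideanSpace ℝ (Fin n)) : ℝ :=
  ∑ i : Fin n, inner ℝ (fderiv ℝ (gradient ψ) x (EuclideanSpace.single i (1 : ℝ)))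
    (EuclideanSpace.single i (1 : ℝ))

lemma contDiff_gradient (n : ℕ) (ψ : EuclideanSpace ℝ (Fin n) → ℝ)
    (hψ : ContDiff ℝ 2 ψ) : ContDiff ℝ 1 (gradient ψ) := by
  have h1 : ContDiff ℝ 1 (fderiv ℝ ψ) := hψ.fderiv_right (by norm_num)
  exact ((InnerProductSpace.toDual ℝ (EuclideanSpace ℝ (Fin n))).symm.contDiff).comp h1

/-- passing to the limit in the `p_k`-Laplace inequality gives
`Δ_∞ψ(x₀) ≤ 0`. -/
theorem infLap_nonpos_of_limit
    (n : ℕ) (ψ : EuclideanSpace ℝ (Fin n) → ℝ) (hψ : ContDiff ℝ 2 ψ)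
    (x₀ : EuclideanSpace ℝ (Fin n))
    (p : ℕ → ℝ) (hp2 : ∀ k, 2 < p k) (hp : Tendsto p atTop atTop)
    (x : ℕ → EuclideanSpace ℝ (Fin n)) (hx : Tendsto x atTop (nhds x₀))
    (hgrad : ∀ k, gradient ψ (x k) ≠ 0)
    (hineq : ∀ k, (p k - 2) * ‖gradient ψ (x k)‖ ^ (p k - 4) * infLap n ψ (x k)
      + ‖gradient ψ (x k)‖ ^ (p k - 2) * lap n ψ (x k) ≤ 0) :
    infLap n ψ x₀ ≤ 0 := by
  have hg1 : ContDiff ℝ 1 (gradient ψ) := contDiff_gradient n ψ hψ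
  have cg : Continuous (gradient ψ) := hg1.continuous
  have cH : Continuous (fderiv ℝ (gradient ψ)) := hg1.continuous_fderiv one_ne_zero
  have cInf : Continuous (infLap n ψ) := by
    unfold infLap
    exact (cH.clm_apply cg).inner cg
  have cLap : Continuous (lap n ψ) := by
    unfold lap
    exact continuous_finset_sum _ fun i _ =>
      (cH.clm_apply continuous_const).inner continuous_const
  -- key pointwise bound
  have key : ∀ k, infLap n ψ (x k) ≤
      (-(‖gradient ψ (x k)‖ ^ 2 * lap n ψ (x k))) * (p k - 2)⁻¹ := by
    intro k
    set a := ‖gradient ψ (x k)‖ with ha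
    have hapos : 0 < a := norm_pos_iff.mpr (hgrad k)
    have hpk : 0 < p k - 2 := by linarith [hp2 k]
    have hsplit : a ^ (p k - 2) = a ^ (p k - 4) * a ^ (2 : ℝ) := by
      rw [← Real.rpow_add hapos]; ring_nf
    have h := hineq k
    rw [hsplit, Real.rpow_two] at h
    have hb : (0:ℝ) < a ^ (p k - 4) := Real.rpow_pos_of_pos hapos _
    have h'' : (p k - 2) * infLap n ψ (x k) + a ^ 2 * lap n ψ (x k) ≤ 0 := by
      nlinarith [hb]
    rw [← div_eq_mul_inv, le_div_iff₀ hpk]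
    linarith
  -- limits
  have hIlim : Tendsto (fun k => infLap n ψ (x k)) atTop (nhds (infLap n ψ x₀)) :=
    (cInf.tendsto x₀).comp hx
  have hnum : Tendsto (fun k => -(‖gradient ψ (x k)‖ ^ 2 * lap n ψ (x k))) atTop
      (nhds (-(‖gradient ψ x₀‖ ^ 2 * lap n ψ x₀))) := by
    have : Continuous fun y : EuclideanSpace ℝ (Fin n) => -(‖gradient ψ y‖ ^ 2 * lap n ψ y) :=
      ((cg.norm.pow 2).mul cLap).neg
    exact (this.tendsto x₀).comp hx
  have hinv : Tendsto (fun k => (p k - 2)⁻¹) atTop (nhds 0) := by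
    apply tendsto_inv_atTop_zero.comp
    exact tendsto_atTop_add_const_right atTop (-2) hp
  have hblim : Tendsto (fun k => (-(‖gradient ψ (x k)‖ ^ 2 * lap n ψ (x k))) * (p k - 2)⁻¹)
      atTop (nhds 0) := by
    have := hnum.mul hinv
    simpa using this
  exact le_of_tendsto_of_tendsto' hIlim hblim key
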